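/- Let A → R be a homomorphism of commutative Noetherian rings and M an R-module. If P is an associated prime of M as an R-module, then the contraction P ∩ A (i.e., the preimage of P under A → R) is an associated prime of M as an A-module. -/

import Mathlib

/-- Let `A → R` be a homomorphism of commutative Noetherian rings and `M` an `R`-module,
viewed also as an `A`-module by restriction of scalars.  If `P` is an associated prime of
`M` over `R`, then its contraction `P ∩ A` is an associated prime of `M` over `A`. -/
theorem comap_associatedPrime {A R : Type*} [CommRing A] [IsNoetherianRing A]
    [CommRing R] [IsNoetherianRing R] (f : A →+* R)
    (M : Type*) [AddCommGroup M] [Module R M] [Module A M]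
    (hcompat : ∀ (a : A) (x : M), a • x = f a • x)
    (P : Ideal R) (hP : P ∈ associatedPrimes R M) :
    P.comap f ∈ associatedPrimes A M := by
  obtain ⟨hprime, x, hx⟩ := hP
  refine ⟨Ideal.comap_isPrime f P, x, ?_⟩
  ext a
  simp only [Ideal.mem_comap, hx, Submodule.mem_annihilator_span_singleton, hcompat,
    Ideal.mem_radical_iff, Submodule.mem_colon_singleton, Submodule.mem_bot, map_pow]
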